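/- arXiv:1206.3502 — 2 statements merged into one kernel-verified Lean document; each statement's English description precedes it below -/
import Mathlib

section
/- Let σ ≥ 2 and ω, c real with 4ω > c². Set κ² = 4ω − c² and α_n = ∫_0^∞ (cosh(σ√(4ω−c²)x) − c/(2√ω))^{−1/σ−n} dx for n = 0, 1. Then the following three inequalities hold: (i) 4(σ−1)ω α₀ − 2√ω c α₀ + (4ω−c²) α₁ > 0; (ii) 4(σ−1)ω α₀ + 2√ω c α₀ − (4ω−c²) α₁ > 0; (iii) c(c²−4ω) α₁ + 2√ω (c² − 4(σ−1)ω) α₀ < 0. Consequently, the Hessian d''(ω,c) of the action, whose determinant equals a positive prefactor times the product of (i) and (ii) and whose trace equals a positive prefactor times the quantity in (iii), has positive determinant and negative trace, so it has no positive eigenvalues: p(d''(ω,c)) = 0. -/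
set_option maxHeartbeats 1000000

open Real MeasureTheory

/-- `α_n(ω,c) = ∫_0^∞ (cosh(σκx) − c/(2√ω))^{−1/σ−n} dx`. -/
noncomputable def alphaInt (σ ω c : ℝ) (n : ℕ) : ℝ :=
  ∫ x in Set.Ioi (0 : ℝ),
    (Real.cosh (σ * Real.sqrt (4 * ω - c ^ 2) * x) - c / (2 * Real.sqrt ω)) ^
      (-(1 / σ) - (n : ℝ))

lemma aux_omega_pos {ω c : ℝ} (h : c ^ 2 < 4 * ω) : 0 < ω := by nlinarith [sq_nonneg c]

lemma aux_abs_lt {ω c : ℝ} (h : c ^ 2 < 4 * ω) : |c| < 2 * Real.sqrt ω := by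
  have hω := aux_omega_pos h
  have h4 : Real.sqrt (4 * ω) = 2 * Real.sqrt ω := by
    rw [show (4:ℝ) * ω = (2:ℝ)^2 * ω by ring, Real.sqrt_mul (by positivity),
      Real.sqrt_sq (by norm_num)]
  calc |c| = Real.sqrt (c^2) := (Real.sqrt_sq_eq_abs c).symm
    _ < Real.sqrt (4*ω) := Real.sqrt_lt_sqrt (sq_nonneg c) h
    _ = 2 * Real.sqrt ω := h4

lemma aux_integrable {σ ω c : ℝ} (hσ : 2 ≤ σ) (h : c ^ 2 < 4 * ω) {p : ℝ} (hp : p < 0) :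
    IntegrableOn
      (fun x => (Real.cosh (σ * Real.sqrt (4 * ω - c ^ 2) * x) - c / (2 * Real.sqrt ω)) ^ p)
      (Set.Ioi 0) := by
  have hω := aux_omega_pos h
  have hsw : 0 < Real.sqrt ω := Real.sqrt_pos.2 hω
  have habs : |c| < 2 * Real.sqrt ω := aux_abs_lt h
  set d := c / (2 * Real.sqrt ω) with hd
  have hdabs : |d| < 1 := by
    rw [hd, abs_div, abs_of_pos (show (0:ℝ) < 2 * Real.sqrt ω by positivity),
      div_lt_one (by positivity)]
    exact habs
  have hκ : 0 < Real.sqrt (4 * ω - c ^ 2) := Real.sqrt_pos.2 (by linarith)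
  have ha : 0 < σ * Real.sqrt (4 * ω - c ^ 2) := by positivity
  set a := σ * Real.sqrt (4 * ω - c ^ 2) with hadef
  set K := (1 - |d|) / 2 with hK
  have hKpos : 0 < K := by rw [hK]; linarith
  have hbase : ∀ x : ℝ, K * Real.exp (a * x) ≤ Real.cosh (a * x) - d := by
    intro x
    have h1 : Real.exp (a * x) / 2 ≤ Real.cosh (a * x) := by
      rw [Real.cosh_eq]
      have := Real.exp_pos (-(a * x))
      linarith
    have hc := Real.one_le_cosh (a * x)
    have hdd : d ≤ |d| := le_abs_self d
    nlinarith [abs_nonneg d]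
  have hBpos : ∀ x : ℝ, 0 < Real.cosh (a * x) - d := fun x =>
    lt_of_lt_of_le (by positivity) (hbase x)
  apply Integrable.mono' (g := fun x => K ^ p * Real.exp (p * a * x))
  · have hint : IntegrableOn (fun x => Real.exp (-(-(p * a)) * x)) (Set.Ioi 0) :=
      exp_neg_integrableOn_Ioi 0 (by nlinarith)
    have : IntegrableOn (fun x => K ^ p * Real.exp (p * a * x)) (Set.Ioi 0) := by
      apply Integrable.const_mul
      simpa [neg_neg, mul_assoc, IntegrableOn] using hint
    exact this
  · apply Continuous.aestronglyMeasurable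
    apply Continuous.rpow_const
    · exact (Real.continuous_cosh.comp (continuous_const.mul continuous_id)).sub continuous_const
    · exact fun x => Or.inl (ne_of_gt (hBpos x))
  · filter_upwards with x
    rw [Real.norm_eq_abs, abs_of_nonneg (Real.rpow_nonneg (hBpos x).le p)]
    calc (Real.cosh (a * x) - d) ^ p
        ≤ (K * Real.exp (a * x)) ^ p :=
          Real.rpow_le_rpow_of_nonpos (by positivity) (hbase x) hp.le
      _ = K ^ p * (Real.exp (a * x)) ^ p := Real.mul_rpow hKpos.le (Real.exp_pos _).le
      _ = K ^ p * Real.exp (p * a * x) := by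
          rw [← Real.exp_mul]; congr 1; ring

lemma aux_pos {f : ℝ → ℝ} (hf : IntegrableOn f (Set.Ioi 0))
    (hpos : ∀ x ∈ Set.Ioi (0:ℝ), 0 < f x) : 0 < ∫ x in Set.Ioi (0:ℝ), f x := by
  rw [setIntegral_pos_iff_support_of_nonneg_ae
    ((ae_restrict_iff' measurableSet_Ioi).2 (.of_forall fun x hx => (hpos x hx).le)) hf]
  refine lt_of_lt_of_le ?_ (measure_mono (fun x hx => ⟨(hpos x hx).ne', hx⟩))
  rw [Real.volume_Ioi]
  exact ENNReal.zero_lt_top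

theorem hessian_negative_definite (σ ω c : ℝ) (hσ : 2 ≤ σ) (h : c ^ 2 < 4 * ω) :
    (0 < 4 * (σ - 1) * ω * alphaInt σ ω c 0 - 2 * Real.sqrt ω * c * alphaInt σ ω c 0
        + (4 * ω - c ^ 2) * alphaInt σ ω c 1) ∧
    (0 < 4 * (σ - 1) * ω * alphaInt σ ω c 0 + 2 * Real.sqrt ω * c * alphaInt σ ω c 0
        - (4 * ω - c ^ 2) * alphaInt σ ω c 1) ∧
    (c * (c ^ 2 - 4 * ω) * alphaInt σ ω c 1
        + 2 * Real.sqrt ω * (c ^ 2 - 4 * (σ - 1) * ω) * alphaInt σ ω c 0 < 0) ∧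
    (∀ A : Matrix (Fin 2) (Fin 2) ℝ, A.IsSymm →
      A.det = (2 : ℝ) ^ (-(2 / σ) - 4) * σ⁻¹ ^ 2 * (1 + σ) ^ (2 / σ) *
          (4 * ω - c ^ 2) ^ (2 / σ - 1) * ω ^ (-(1 / σ) - 2) *
          (4 * (σ - 1) * ω * alphaInt σ ω c 0 - 2 * Real.sqrt ω * c * alphaInt σ ω c 0
            + (4 * ω - c ^ 2) * alphaInt σ ω c 1) *
          (4 * (σ - 1) * ω * alphaInt σ ω c 0 + 2 * Real.sqrt ω * c * alphaInt σ ω c 0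
            - (4 * ω - c ^ 2) * alphaInt σ ω c 1) →
      A.trace = (2 : ℝ) ^ (-(1 / σ) - 2) * σ⁻¹ * (1 + σ) ^ (1 / σ) *
          (4 * ω - c ^ 2) ^ (1 / σ - 1) * (1 + ω) * ω ^ (-(1 / (2 * σ)) - 3 / 2) *
          (c * (c ^ 2 - 4 * ω) * alphaInt σ ω c 1
            + 2 * Real.sqrt ω * (c ^ 2 - 4 * (σ - 1) * ω) * alphaInt σ ω c 0) →
      0 < A.det ∧ A.trace < 0 ∧
        ∀ (μ : ℝ) (v : Fin 2 → ℝ), v ≠ 0 → A.mulVec v = μ • v → μ < 0) := by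
  have hω : 0 < ω := aux_omega_pos h
  have hσ0 : 0 < σ := by linarith
  have hsw : 0 < Real.sqrt ω := Real.sqrt_pos.2 hω
  have habs : |c| < 2 * Real.sqrt ω := aux_abs_lt h
  obtain ⟨hc2, hc1⟩ := abs_lt.mp habs
  set s := Real.sqrt ω with hsdef
  have hs2 : s ^ 2 = ω := Real.sq_sqrt hω.le
  have hκ : 0 < Real.sqrt (4 * ω - c ^ 2) := Real.sqrt_pos.2 (by linarith)
  have ha : 0 < σ * Real.sqrt (4 * ω - c ^ 2) := by positivity
  set a := σ * Real.sqrt (4 * ω - c ^ 2) with hadef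
  set d := c / (2 * s) with hddef
  set m := 1 - d with hmdef
  have hm : 0 < m := by
    rw [hmdef, hddef, sub_pos, div_lt_one (by positivity)]
    linarith
  have hBge : ∀ x : ℝ, m ≤ Real.cosh (a * x) - d := by
    intro x
    have := Real.one_le_cosh (a * x)
    rw [hmdef]; linarith
  have hBpos : ∀ x : ℝ, 0 < Real.cosh (a * x) - d := fun x => lt_of_lt_of_le hm (hBge x)
  have hp0 : -(1 / σ) - ((0:ℕ):ℝ) < 0 := by
    have : 0 < 1 / σ := by positivity
    push_cast; linarith
  have hp1 : -(1 / σ) - ((1:ℕ):ℝ) < 0 := by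
    have : 0 < 1 / σ := by positivity
    push_cast; linarith
  have hi0 : IntegrableOn
      (fun x => (Real.cosh (a * x) - d) ^ (-(1 / σ) - ((0:ℕ):ℝ))) (Set.Ioi 0) :=
    aux_integrable hσ h hp0
  have hi1 : IntegrableOn
      (fun x => (Real.cosh (a * x) - d) ^ (-(1 / σ) - ((1:ℕ):ℝ))) (Set.Ioi 0) :=
    aux_integrable hσ h hp1
  set α₀ := alphaInt σ ω c 0 with hα₀def
  set α₁ := alphaInt σ ω c 1 with hα₁def
  have he0 : α₀ = ∫ x in Set.Ioi (0:ℝ), (Real.cosh (a * x) - d) ^ (-(1 / σ) - ((0:ℕ):ℝ)) := rfl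
  have he1 : α₁ = ∫ x in Set.Ioi (0:ℝ), (Real.cosh (a * x) - d) ^ (-(1 / σ) - ((1:ℕ):ℝ)) := rfl
  have hα₀ : 0 < α₀ := by
    rw [he0]
    exact aux_pos hi0 fun x _ => Real.rpow_pos_of_pos (hBpos x) _
  have hα₁ : 0 < α₁ := by
    rw [he1]
    exact aux_pos hi1 fun x _ => Real.rpow_pos_of_pos (hBpos x) _
  -- strict comparison: α₁ < m⁻¹ * α₀
  have hcmp : α₁ < m⁻¹ * α₀ := by
    have hdiff : 0 < ∫ x in Set.Ioi (0:ℝ),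
        (m⁻¹ * (Real.cosh (a * x) - d) ^ (-(1 / σ) - ((0:ℕ):ℝ))
          - (Real.cosh (a * x) - d) ^ (-(1 / σ) - ((1:ℕ):ℝ))) := by
      apply aux_pos ((hi0.const_mul m⁻¹).sub hi1)
      intro x hx
      have hxpos : 0 < x := hx
      show 0 < m⁻¹ * (Real.cosh (a * x) - d) ^ (-(1 / σ) - ((0:ℕ):ℝ))
          - (Real.cosh (a * x) - d) ^ (-(1 / σ) - ((1:ℕ):ℝ))
      have hB : m < Real.cosh (a * x) - d := by
        have h1 : 1 < Real.cosh (a * x) :=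
          Real.one_lt_cosh.2 (ne_of_gt (mul_pos ha hxpos))
        rw [hmdef]; linarith
      have hrw : (Real.cosh (a * x) - d) ^ (-(1 / σ) - ((1:ℕ):ℝ))
          = (Real.cosh (a * x) - d) ^ (-(1 / σ) - ((0:ℕ):ℝ)) / (Real.cosh (a * x) - d) := by
        push_cast
        rw [show -(1/σ) - (1:ℝ) = (-(1/σ) - 0) - 1 by ring,
          Real.rpow_sub (hBpos x), Real.rpow_one]
      rw [hrw, sub_pos]
      have hnum : 0 < (Real.cosh (a * x) - d) ^ (-(1 / σ) - ((0:ℕ):ℝ)) :=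
        Real.rpow_pos_of_pos (hBpos x) _
      calc (Real.cosh (a * x) - d) ^ (-(1 / σ) - ((0:ℕ):ℝ)) / (Real.cosh (a * x) - d)
          < (Real.cosh (a * x) - d) ^ (-(1 / σ) - ((0:ℕ):ℝ)) / m :=
            div_lt_div_of_pos_left hnum hm hB
        _ = m⁻¹ * (Real.cosh (a * x) - d) ^ (-(1 / σ) - ((0:ℕ):ℝ)) := by
            rw [div_eq_inv_mul]
    rw [integral_sub (hi0.const_mul m⁻¹) hi1, integral_const_mul, ← he0, ← he1] at hdiff
    linarith
  have hkey : (2 * s - c) * α₁ < 2 * s * α₀ := by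
    have h1 : m * α₁ < α₀ := by
      have := mul_lt_mul_of_pos_left hcmp hm
      rwa [mul_inv_cancel_left₀ (ne_of_gt hm)] at this
    have hmex : 2 * s * m = 2 * s - c := by
      rw [hmdef, hddef]; field_simp
    have h3 : 2 * s * m * α₁ < 2 * s * α₀ := by
      have h4 := mul_lt_mul_of_pos_left h1 (show (0:ℝ) < 2 * s by linarith)
      rw [mul_assoc]
      exact h4
    rwa [hmex] at h3
  have hP2 : 0 < 2 * s + c := by linarith
  have hi : 0 < 4 * (σ - 1) * ω * α₀ - 2 * s * c * α₀ + (4 * ω - c ^ 2) * α₁ := by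
    rw [← hs2]
    nlinarith [mul_pos (mul_pos (mul_pos two_pos hsw) (show (0:ℝ) < 2*s - c by linarith)) hα₀,
      mul_pos (show (0:ℝ) < 4 * s^2 - c^2 by nlinarith) hα₁,
      mul_nonneg (mul_nonneg (mul_nonneg (show (0:ℝ) ≤ σ - 2 by linarith) hsw.le) hsw.le) hα₀.le]
  have hii : 0 < 4 * (σ - 1) * ω * α₀ + 2 * s * c * α₀ - (4 * ω - c ^ 2) * α₁ := by
    rw [← hs2]
    nlinarith [mul_lt_mul_of_pos_left hkey hP2,
      mul_nonneg (mul_nonneg (mul_nonneg (show (0:ℝ) ≤ σ - 2 by linarith) hsw.le) hsw.le)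
        hα₀.le]
  have hiii : c * (c ^ 2 - 4 * ω) * α₁ + 2 * s * (c ^ 2 - 4 * (σ - 1) * ω) * α₀ < 0 := by
    rw [← hs2]
    rcases le_or_gt c 0 with hc | hc
    · have hmul : (-c) * (2*s + c) * ((2 * s - c) * α₁) ≤ (-c) * (2*s + c) * (2 * s * α₀) :=
        mul_le_mul_of_nonneg_left hkey.le
          (mul_nonneg (neg_nonneg.2 hc) hP2.le)
      have e1 : c * (c ^ 2 - 4 * s ^ 2) * α₁ ≤ (-c) * (2*s + c) * (2 * s * α₀) := by
        calc c * (c ^ 2 - 4 * s ^ 2) * α₁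
            = (-c) * (2*s + c) * ((2 * s - c) * α₁) := by ring
          _ ≤ _ := hmul
      have hK : (-c) * (2*s + c) * (2 * s) + 2 * s * (c ^ 2 - 4 * (σ - 1) * s ^ 2) < 0 := by
        nlinarith [mul_pos (mul_pos hsw hsw) hP2,
          mul_nonneg (show (0:ℝ) ≤ σ - 2 by linarith)
            (mul_nonneg (mul_nonneg hsw.le hsw.le) hsw.le)]
      nlinarith [e1, mul_neg_of_neg_of_pos hK hα₀]
    · nlinarith [mul_pos (mul_pos hc (show (0:ℝ) < 4*s^2 - c^2 by nlinarith)) hα₁,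
        mul_pos (mul_pos hsw (show (0:ℝ) < 4*s^2 - c^2 by nlinarith)) hα₀,
        mul_nonneg (mul_nonneg (show (0:ℝ) ≤ σ - 2 by linarith)
          (mul_pos (mul_pos hsw hsw) hsw).le) hα₀.le]
  refine ⟨hi, hii, hiii, fun A _ hdet htr => ?_⟩
  have hκ2 : (0:ℝ) < 4 * ω - c ^ 2 := by linarith
  have hdetpos : 0 < A.det := by
    rw [hdet]
    have hP : 0 < (2 : ℝ) ^ (-(2 / σ) - 4) * σ⁻¹ ^ 2 * (1 + σ) ^ (2 / σ) *
        (4 * ω - c ^ 2) ^ (2 / σ - 1) * ω ^ (-(1 / σ) - 2) :=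
      mul_pos (mul_pos (mul_pos (mul_pos (Real.rpow_pos_of_pos two_pos _)
        (pow_pos (inv_pos.2 hσ0) 2)) (Real.rpow_pos_of_pos (by linarith) _))
        (Real.rpow_pos_of_pos hκ2 _)) (Real.rpow_pos_of_pos hω _)
    exact mul_pos (mul_pos hP hi) hii
  have htrneg : A.trace < 0 := by
    rw [htr]
    have hP : 0 < (2 : ℝ) ^ (-(1 / σ) - 2) * σ⁻¹ * (1 + σ) ^ (1 / σ) *
        (4 * ω - c ^ 2) ^ (1 / σ - 1) * (1 + ω) * ω ^ (-(1 / (2 * σ)) - 3 / 2) :=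
      mul_pos (mul_pos (mul_pos (mul_pos (mul_pos (Real.rpow_pos_of_pos two_pos _)
        (inv_pos.2 hσ0)) (Real.rpow_pos_of_pos (by linarith) _))
        (Real.rpow_pos_of_pos hκ2 _)) (by linarith)) (Real.rpow_pos_of_pos hω _)
    exact mul_neg_of_pos_of_neg hP hiii
  refine ⟨hdetpos, htrneg, fun μ v hv hAv => ?_⟩
  have hker : (A - μ • 1).mulVec v = 0 := by
    rw [Matrix.sub_mulVec, Matrix.smul_mulVec, Matrix.one_mulVec, hAv, sub_self]
  have hdet0 : (A - μ • 1).det = 0 := Matrix.exists_mulVec_eq_zero_iff.mp ⟨v, hv, hker⟩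
  rw [Matrix.det_fin_two] at hdet0
  rw [Matrix.det_fin_two] at hdetpos
  rw [Matrix.trace_fin_two] at htrneg
  norm_num [Matrix.sub_apply, Matrix.smul_apply, Matrix.one_apply, smul_eq_mul,
    Fin.ext_iff] at hdet0
  by_contra hge
  push_neg at hge
  nlinarith [hdet0, hdetpos, htrneg, hge, sq_nonneg μ,
    mul_nonneg hge (show (0:ℝ) ≤ -(A 0 0 + A 1 1) by linarith)]
end

section
/- Let σ > 0 and ω, c real with ω > 0 and 4ω > c². Set κ = √(4ω−c²), z = c/(2√ω), and α_n = ∫_0^∞ (cosh(σκx) − z)^{−1/σ−n} dx for n = 0, 1. Define F(z;σ) = (σ−1)² ( ∫_0^∞ (cosh y − z)^{−1/σ} dy )² − ( ∫_0^∞ (cosh y − z)^{−1/σ−1}(z cosh y − 1) dy )². Then 16(σ−1)² ω² α₀² − ( (c²−4ω) α₁ + 2√ω c α₀ )² = (16 ω² / (σ² (4ω−c²))) · F(c/(2√ω); σ). In particular, the left-hand side (which equals det[d''(ω,c)] divided by a positive prefactor) has the same sign as F(c/(2√ω); σ). -/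
open Real MeasureTheory

/-- The function `F(z;σ)` governing the sign of `det d''`. -/
noncomputable def Fsig (z σ : ℝ) : ℝ :=
  (σ - 1) ^ 2 * (∫ y in Set.Ioi (0 : ℝ), (Real.cosh y - z) ^ (-(1 / σ))) ^ 2
    - (∫ y in Set.Ioi (0 : ℝ),
        (Real.cosh y - z) ^ (-(1 / σ) - 1) * (z * Real.cosh y - 1)) ^ 2

lemma cosh_sub_pos {z : ℝ} (hz : z < 1) (y : ℝ) : 0 < Real.cosh y - z := by
  have := Real.one_le_cosh y; linarith

/-- Integrability of `(cosh y - z)^p` on `(0,∞)` for `z < 1`, `p < 0`. -/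
lemma integrable_cosh_rpow {z p : ℝ} (hz : z < 1) (hp : p < 0) :
    IntegrableOn (fun y => (Real.cosh y - z) ^ p) (Set.Ioi (0 : ℝ)) := by
  have hpos := cosh_sub_pos hz
  set m : ℝ := (1 - max z 0) / 2 with hm
  have hmax : max z 0 < 1 := max_lt hz one_pos
  have hm0 : 0 < m := by rw [hm]; linarith
  have hbound : ∀ y : ℝ, m * Real.exp y ≤ Real.cosh y - z := by
    intro y
    have h1 : Real.exp y / 2 ≤ Real.cosh y := by
      rw [Real.cosh_eq]
      have := Real.exp_pos (-y); linarith
    rcases le_or_gt z 0 with hz0 | hz0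
    · have : max z 0 = 0 := max_eq_right hz0
      rw [hm, this]
      have := Real.one_le_cosh y
      nlinarith
    · have : max z 0 = z := max_eq_left hz0.le
      rw [hm, this]
      have hc1 := Real.one_le_cosh y
      nlinarith [mul_nonneg (by linarith : (0:ℝ) ≤ 1 - z)
        (by linarith : 0 ≤ Real.cosh y - Real.exp y / 2),
        mul_nonneg hz0.le (by linarith : 0 ≤ Real.cosh y - 1)]
  have hg : IntegrableOn (fun y => m ^ p * Real.exp (p * y)) (Set.Ioi (0 : ℝ)) := by
    have := (exp_neg_integrableOn_Ioi 0 (show 0 < -p by linarith)).const_mul (m ^ p)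
    simp only [neg_neg] at this; exact this
  refine hg.mono' ?_ ?_
  · exact ((Real.continuous_cosh.sub continuous_const).rpow_const
      (fun x => Or.inl (hpos x).ne')).aestronglyMeasurable
  · filter_upwards with y
    rw [Real.norm_eq_abs, abs_of_nonneg (Real.rpow_nonneg (hpos y).le p)]
    have h1 : (Real.cosh y - z) ^ p ≤ (m * Real.exp y) ^ p :=
      Real.rpow_le_rpow_of_nonpos (by positivity) (hbound y) hp.le
    calc (Real.cosh y - z) ^ p ≤ (m * Real.exp y) ^ p := h1
      _ = m ^ p * Real.exp (p * y) := by
          rw [Real.mul_rpow hm0.le (Real.exp_pos y).le, ← Real.exp_mul]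
          ring

lemma sign_mul_of_pos {C : ℝ} (hC : 0 < C) (x : ℝ) :
    Real.sign (C * x) = Real.sign x := by
  rcases lt_trichotomy x 0 with hx | hx | hx
  · rw [Real.sign_of_neg hx, Real.sign_of_neg (mul_neg_of_pos_of_neg hC hx)]
  · simp [hx]
  · rw [Real.sign_of_pos hx, Real.sign_of_pos (mul_pos hC hx)]

theorem det_sign_via_F (σ ω c : ℝ) (hσ : 0 < σ) (hω : 0 < ω) (h : c ^ 2 < 4 * ω) :
    16 * (σ - 1) ^ 2 * ω ^ 2 * alphaInt σ ω c 0 ^ 2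
        - ((c ^ 2 - 4 * ω) * alphaInt σ ω c 1
            + 2 * Real.sqrt ω * c * alphaInt σ ω c 0) ^ 2
      = (16 * ω ^ 2 / (σ ^ 2 * (4 * ω - c ^ 2))) * Fsig (c / (2 * Real.sqrt ω)) σ ∧
    Real.sign
        (16 * (σ - 1) ^ 2 * ω ^ 2 * alphaInt σ ω c 0 ^ 2
          - ((c ^ 2 - 4 * ω) * alphaInt σ ω c 1
              + 2 * Real.sqrt ω * c * alphaInt σ ω c 0) ^ 2)
      = Real.sign (Fsig (c / (2 * Real.sqrt ω)) σ) := by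
  obtain ⟨s, hs0, rfl⟩ : ∃ s, 0 < s ∧ ω = s ^ 2 :=
    ⟨Real.sqrt ω, Real.sqrt_pos.2 hω, (Real.sq_sqrt hω.le).symm⟩
  have hss : Real.sqrt (s ^ 2) = s := Real.sqrt_sq hs0.le
  have hK : (0:ℝ) < 4 * s ^ 2 - c ^ 2 := by linarith
  set k : ℝ := Real.sqrt (4 * s ^ 2 - c ^ 2) with hkdef
  have hk0 : 0 < k := Real.sqrt_pos.2 hK
  have hk2 : k ^ 2 = 4 * s ^ 2 - c ^ 2 := Real.sq_sqrt hK.le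
  set z : ℝ := c / (2 * s) with hzdef
  have hcabs : |c| < 2 * s := abs_lt_of_sq_lt_sq (by nlinarith) (by positivity)
  have hz1 : z < 1 := by
    rw [hzdef, div_lt_one (by positivity)]
    exact lt_of_abs_lt hcabs
  have hp1 : -(1/σ) < 0 := neg_lt_zero.mpr (by positivity)
  have hp2 : -(1/σ) - 1 < 0 := by linarith
  have hpos := cosh_sub_pos hz1
  -- change of variables
  have key : ∀ p : ℝ, (∫ x in Set.Ioi (0:ℝ), (Real.cosh (σ * k * x) - z) ^ p)
      = (σ * k)⁻¹ * ∫ y in Set.Ioi (0:ℝ), (Real.cosh y - z) ^ p := by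
    intro p
    rw [integral_comp_mul_left_Ioi (fun y => (Real.cosh y - z) ^ p) 0
      (by positivity : 0 < σ * k), mul_zero, smul_eq_mul]
  have hα0 : alphaInt σ (s ^ 2) c 0
      = (σ * k)⁻¹ * ∫ y in Set.Ioi (0:ℝ), (Real.cosh y - z) ^ (-(1/σ)) := by
    rw [alphaInt]
    simp only [hss, ← hkdef, ← hzdef, Nat.cast_zero, sub_zero]
    exact key _
  have hα1 : alphaInt σ (s ^ 2) c 1
      = (σ * k)⁻¹ * ∫ y in Set.Ioi (0:ℝ), (Real.cosh y - z) ^ (-(1/σ) - 1) := by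
    rw [alphaInt]
    simp only [hss, ← hkdef, ← hzdef, Nat.cast_one]
    exact key _
  -- rewriting the second integral in F
  have hrw : ∀ y : ℝ, (Real.cosh y - z) ^ (-(1/σ) - 1) * (z * Real.cosh y - 1)
      = z * (Real.cosh y - z) ^ (-(1/σ)) - (1 - z ^ 2) * (Real.cosh y - z) ^ (-(1/σ) - 1) := by
    intro y
    have h2 : (Real.cosh y - z) ^ (-(1/σ))
        = (Real.cosh y - z) ^ (-(1/σ) - 1) * (Real.cosh y - z) := by
      have h3 := Real.rpow_add_one (hpos y).ne' (-(1/σ) - 1)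
      rw [sub_add_cancel] at h3
      exact h3
    rw [h2]; ring
  have hI : (∫ y in Set.Ioi (0:ℝ), (Real.cosh y - z) ^ (-(1/σ) - 1) * (z * Real.cosh y - 1))
      = z * (∫ y in Set.Ioi (0:ℝ), (Real.cosh y - z) ^ (-(1/σ)))
        - (1 - z ^ 2) * ∫ y in Set.Ioi (0:ℝ), (Real.cosh y - z) ^ (-(1/σ) - 1) := by
    simp only [hrw]
    rw [integral_sub ((integrable_cosh_rpow hz1 hp1).const_mul z)
      ((integrable_cosh_rpow hz1 hp2).const_mul (1 - z ^ 2)),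
      integral_const_mul, integral_const_mul]
  set A : ℝ := ∫ y in Set.Ioi (0:ℝ), (Real.cosh y - z) ^ (-(1/σ)) with hA
  set B : ℝ := ∫ y in Set.Ioi (0:ℝ), (Real.cosh y - z) ^ (-(1/σ) - 1) with hB
  have hT : ((σ * k)⁻¹) ^ 2 = 1 / (σ ^ 2 * (4 * s ^ 2 - c ^ 2)) := by
    rw [← hk2]; field_simp
  have hFs : Fsig (c / (2 * Real.sqrt (s ^ 2))) σ
      = (σ - 1) ^ 2 * A ^ 2 - (z * A - (1 - z ^ 2) * B) ^ 2 := by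
    rw [Fsig, hss, ← hzdef, hI]
  have hmain : 16 * (σ - 1) ^ 2 * (s ^ 2) ^ 2 * alphaInt σ (s ^ 2) c 0 ^ 2
        - ((c ^ 2 - 4 * s ^ 2) * alphaInt σ (s ^ 2) c 1
            + 2 * Real.sqrt (s ^ 2) * c * alphaInt σ (s ^ 2) c 0) ^ 2
      = (16 * (s ^ 2) ^ 2 / (σ ^ 2 * (4 * s ^ 2 - c ^ 2)))
          * Fsig (c / (2 * Real.sqrt (s ^ 2))) σ := by
    rw [hα0, hα1, hFs, hss]
    calc 16 * (σ - 1) ^ 2 * (s ^ 2) ^ 2 * ((σ * k)⁻¹ * A) ^ 2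
          - ((c ^ 2 - 4 * s ^ 2) * ((σ * k)⁻¹ * B)
              + 2 * s * c * ((σ * k)⁻¹ * A)) ^ 2
        = ((σ * k)⁻¹) ^ 2 * (16 * (σ - 1) ^ 2 * (s ^ 2) ^ 2 * A ^ 2
            - ((c ^ 2 - 4 * s ^ 2) * B + 2 * s * c * A) ^ 2) := by ring
      _ = (1 / (σ ^ 2 * (4 * s ^ 2 - c ^ 2))) * (16 * (σ - 1) ^ 2 * (s ^ 2) ^ 2 * A ^ 2
            - ((c ^ 2 - 4 * s ^ 2) * B + 2 * s * c * A) ^ 2) := by rw [hT]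
      _ = (16 * (s ^ 2) ^ 2 / (σ ^ 2 * (4 * s ^ 2 - c ^ 2)))
            * ((σ - 1) ^ 2 * A ^ 2 - (z * A - (1 - z ^ 2) * B) ^ 2) := by
          rw [hzdef]
          field_simp
          ring
  refine ⟨hmain, ?_⟩
  rw [hmain]
  exact sign_mul_of_pos (by positivity) _
end
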